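/- Assume m = 1 (a single input) and that the graph of the system is an input-rooted out-branching: every state i is the endpoint of exactly one walk from the input (unique over all lengths d and all index sequences); let d_i denote the length of this unique walk and d_max = max_i d_i. Then a subset S of {1,...,n} of states is herdable if and only if there exist sets X_d in {P_d, N_d, emptyset} for d = 1,...,d_max such that S is contained in the union over d of X_d; in particular, every such union of sets X_d is itself a herdable set. -/

import Mathlib

/-- `k` is a walk of length `e + 1` from input `j` to state `i`: it visits the states
`k 0, k 1, …, k e`, ends at `i`, starts along a nonzero entry of `B`, and follows
nonzero entries of `A`. -/
def IsWalk {n m : ℕ} (A : Matrix (Fin n) (Fin n) ℝ) (B : Matrix (Fin n) (Fin m) ℝ)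
    (j : Fin m) (i : Fin n) {e : ℕ} (k : Fin (e + 1) → Fin n) : Prop :=
  k (Fin.last e) = i ∧ B (k 0) j ≠ 0 ∧ ∀ t : Fin e, A (k t.succ) (k t.castSucc) ≠ 0

/-- The weight of the walk `k 0, …, k e` from input `j`:
`B (k 0) j * ∏ₜ A (k (t+1)) (k t)`. -/
def walkWeight {n m : ℕ} (A : Matrix (Fin n) (Fin n) ℝ) (B : Matrix (Fin n) (Fin m) ℝ)
    (j : Fin m) {e : ℕ} (k : Fin (e + 1) → Fin n) : ℝ :=
  B (k 0) j * ∏ t : Fin e, A (k t.succ) (k t.castSucc)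

open Classical in
/-- `rho A B j i d` is the sum of the weights of all walks of length `d` from input `j`
to state `i` (zero if there are none, in particular for `d = 0`). -/
noncomputable def rho {n m : ℕ} (A : Matrix (Fin n) (Fin n) ℝ) (B : Matrix (Fin n) (Fin m) ℝ)
    (j : Fin m) (i : Fin n) : ℕ → ℝ
  | 0 => 0
  | e + 1 => ∑ k : Fin (e + 1) → Fin n,
      if IsWalk A B j i k then walkWeight A B j k else 0

/-- `Pset A B j d` is the set of states reachable from input `j` by at least one walk of
length `d` of positive weight. -/
def Pset {n m : ℕ} (A : Matrix (Fin n) (Fin n) ℝ) (B : Matrix (Fin n) (Fin m) ℝ)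
    (j : Fin m) : ℕ → Set (Fin n)
  | 0 => ∅
  | e + 1 => {i | ∃ k : Fin (e + 1) → Fin n, IsWalk A B j i k ∧ 0 < walkWeight A B j k}

/-- `Nset A B j d` is the set of states reachable from input `j` by at least one walk of
length `d` of negative weight. -/
def Nset {n m : ℕ} (A : Matrix (Fin n) (Fin n) ℝ) (B : Matrix (Fin n) (Fin m) ℝ)
    (j : Fin m) : ℕ → Set (Fin n)
  | 0 => ∅
  | e + 1 => {i | ∃ k : Fin (e + 1) → Fin n, IsWalk A B j i k ∧ walkWeight A B j k < 0}

/-- The controllability matrix `C = [B, AB, …, A^{n-1} B]`; the column indexed by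
`(d, j)` is the `j`-th column of `A^d B`. -/
def ctrb {n m : ℕ} (A : Matrix (Fin n) (Fin n) ℝ) (B : Matrix (Fin n) (Fin m) ℝ) :
    Matrix (Fin n) (Fin n × Fin m) ℝ := fun i p => (A ^ (p.1 : ℕ) * B) i p.2

lemma isWalk_snoc {n m : ℕ} (A : Matrix (Fin n) (Fin n) ℝ) (B : Matrix (Fin n) (Fin m) ℝ)
    (j : Fin m) (i : Fin n) {e : ℕ} (k : Fin (e + 1) → Fin n) (v : Fin n) :
    IsWalk A B j i (Fin.snoc k v) ↔
      v = i ∧ A v (k (Fin.last e)) ≠ 0 ∧ IsWalk A B j (k (Fin.last e)) k := by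
  have h0 : (0 : Fin (e + 2)) = Fin.castSucc 0 := rfl
  unfold IsWalk
  constructor
  · rintro ⟨h1, h2, h3⟩
    rw [Fin.snoc_last] at h1
    rw [h0, Fin.snoc_castSucc] at h2
    refine ⟨h1, ?_, rfl, h2, fun t => ?_⟩
    · have := h3 (Fin.last e)
      rwa [Fin.succ_last, Fin.snoc_last, Fin.snoc_castSucc] at this
    · have := h3 t.castSucc
      rwa [Fin.succ_castSucc, Fin.snoc_castSucc, Fin.snoc_castSucc] at this
  · rintro ⟨h1, h2, _, h4, h5⟩
    refine ⟨by rw [Fin.snoc_last]; exact h1, by rw [h0, Fin.snoc_castSucc]; exact h4, fun t => ?_⟩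
    refine Fin.lastCases ?_ (fun s => ?_) t
    · rw [Fin.succ_last, Fin.snoc_last, Fin.snoc_castSucc]; exact h2
    · rw [Fin.succ_castSucc, Fin.snoc_castSucc, Fin.snoc_castSucc]; exact h5 s

lemma walkWeight_snoc {n m : ℕ} (A : Matrix (Fin n) (Fin n) ℝ) (B : Matrix (Fin n) (Fin m) ℝ)
    (j : Fin m) {e : ℕ} (k : Fin (e + 1) → Fin n) (v : Fin n) :
    walkWeight A B j (Fin.snoc k v) = A v (k (Fin.last e)) * walkWeight A B j k := by
  have h0 : (0 : Fin (e + 2)) = Fin.castSucc 0 := rfl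
  unfold walkWeight
  rw [Fin.prod_univ_castSucc]
  simp only [Fin.succ_castSucc, Fin.snoc_castSucc, Fin.succ_last, Fin.snoc_last, h0]
  ring

lemma rho_one {n m : ℕ} (A : Matrix (Fin n) (Fin n) ℝ) (B : Matrix (Fin n) (Fin m) ℝ)
    (j : Fin m) (i : Fin n) : rho A B j i 1 = B i j := by
  classical
  rw [rho]
  rw [← Equiv.sum_comp (Equiv.funUnique (Fin 1) (Fin n)).symm]
  have hW : ∀ v : Fin n, walkWeight A B j (fun _ : Fin 1 => v) = B v j := by
    intro v; unfold walkWeight; simp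
  have hIW : ∀ v : Fin n, IsWalk A B j i (fun _ : Fin 1 => v) ↔ (v = i ∧ B v j ≠ 0) := by
    intro v; unfold IsWalk
    constructor
    · rintro ⟨h1, h2, _⟩; exact ⟨h1, h2⟩
    · rintro ⟨h1, h2⟩; exact ⟨h1, h2, fun t => t.elim0⟩
  have : ∀ v : Fin n,
      (if IsWalk A B j i ((Equiv.funUnique (Fin 1) (Fin n)).symm v)
        then walkWeight A B j ((Equiv.funUnique (Fin 1) (Fin n)).symm v) else 0)
      = if v = i then (if B v j ≠ 0 then B v j else 0) else 0 := by
    intro v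
    have : ((Equiv.funUnique (Fin 1) (Fin n)).symm v) = fun _ : Fin 1 => v := rfl
    rw [this, if_congr (hIW v) rfl rfl, hW, ite_and]
  rw [Finset.sum_congr rfl (fun v _ => this v), Finset.sum_ite_eq' Finset.univ i]
  simp only [Finset.mem_univ, if_true]
  by_cases h : B i j = 0 <;> simp [h]

lemma rho_succ {n m : ℕ} (A : Matrix (Fin n) (Fin n) ℝ) (B : Matrix (Fin n) (Fin m) ℝ)
    (j : Fin m) (i : Fin n) (e : ℕ) :
    rho A B j i (e + 2) = ∑ v : Fin n, A i v * rho A B j v (e + 1) := by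
  classical
  rw [rho]
  rw [← Equiv.sum_comp (Fin.snocEquiv (fun _ : Fin (e + 1 + 1) => Fin n))]
  rw [Fintype.sum_prod_type]
  have key : ∀ (v : Fin n) (k : Fin (e + 1) → Fin n),
      (if IsWalk A B j i (Fin.snocEquiv (fun _ : Fin (e + 1 + 1) => Fin n) (v, k))
        then walkWeight A B j (Fin.snocEquiv (fun _ : Fin (e + 1 + 1) => Fin n) (v, k)) else 0)
      = if v = i then (A v (k (Fin.last e)) *
          (if IsWalk A B j (k (Fin.last e)) k then walkWeight A B j k else 0)) else 0 := by
    intro v k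
    have hsnoc : (Fin.snocEquiv (fun _ : Fin (e + 1 + 1) => Fin n) (v, k)) = Fin.snoc k v := rfl
    rw [hsnoc, if_congr (isWalk_snoc A B j i k v) rfl rfl, walkWeight_snoc]
    by_cases h1 : v = i
    · simp only [h1, if_true, true_and]
      by_cases h2 : A i (k (Fin.last e)) = 0
      · simp [h2]
      · by_cases h3 : IsWalk A B j (k (Fin.last e)) k <;> simp [h2, h3]
    · simp [h1]
  rw [Finset.sum_congr rfl (fun v _ => Finset.sum_congr rfl (fun k _ => key v k))]
  rw [Finset.sum_comm]
  rw [Finset.sum_congr rfl (fun k _ => Finset.sum_ite_eq' Finset.univ i _)]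
  simp only [Finset.mem_univ, if_true]
  have hrho : ∀ v : Fin n, rho A B j v (e + 1)
      = ∑ k : Fin (e + 1) → Fin n, if IsWalk A B j v k then walkWeight A B j k else 0 := by
    intro v; rw [rho]
  have hswap : ∀ k : Fin (e + 1) → Fin n,
      (∑ v : Fin n, A i v * (if IsWalk A B j v k then walkWeight A B j k else 0))
      = A i (k (Fin.last e)) * (if IsWalk A B j (k (Fin.last e)) k then walkWeight A B j k else 0) := by
    intro k
    refine Finset.sum_eq_single (k (Fin.last e)) (fun v _ hv => ?_) (by simp)
    have hnw : ¬ IsWalk A B j v k := fun h => hv h.1.symm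
    simp [hnw]
  calc (∑ k : Fin (e + 1) → Fin n,
        A i (k (Fin.last e)) * if IsWalk A B j (k (Fin.last e)) k then walkWeight A B j k else 0)
      = ∑ k : Fin (e + 1) → Fin n, ∑ v : Fin n,
          A i v * (if IsWalk A B j v k then walkWeight A B j k else 0) := by
        exact Finset.sum_congr rfl (fun k _ => (hswap k).symm)
    _ = ∑ v : Fin n, ∑ k : Fin (e + 1) → Fin n,
          A i v * (if IsWalk A B j v k then walkWeight A B j k else 0) := Finset.sum_comm
    _ = ∑ v : Fin n, A i v * rho A B j v (e + 1) := by
        refine Finset.sum_congr rfl (fun v _ => ?_)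
        rw [hrho, Finset.mul_sum]

lemma walkWeight_ne_zero {n m : ℕ} {A : Matrix (Fin n) (Fin n) ℝ} {B : Matrix (Fin n) (Fin m) ℝ}
    {j : Fin m} {i : Fin n} {e : ℕ} {k : Fin (e + 1) → Fin n} (hk : IsWalk A B j i k) :
    walkWeight A B j k ≠ 0 :=
  mul_ne_zero hk.2.1 (Finset.prod_ne_zero_iff.2 fun t _ => hk.2.2 t)

lemma pow_entry_eq_rho {n m : ℕ} (A : Matrix (Fin n) (Fin n) ℝ) (B : Matrix (Fin n) (Fin m) ℝ)
    (j : Fin m) (i : Fin n) (e : ℕ) : (A ^ e * B) i j = rho A B j i (e + 1) := by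
  induction e generalizing i with
  | zero => simp [rho_one]
  | succ e ih =>
      rw [pow_succ', Matrix.mul_assoc, rho_succ]
      rw [Matrix.mul_apply]
      exact Finset.sum_congr rfl fun v _ => by rw [ih v]

lemma rho_of_isWalk {n m : ℕ} {A : Matrix (Fin n) (Fin n) ℝ} {B : Matrix (Fin n) (Fin m) ℝ}
    {j : Fin m}
    (hout : ∀ i : Fin n, ∃! w : (e : ℕ) × (Fin (e + 1) → Fin n), IsWalk A B j i w.2)
    {i : Fin n} {e : ℕ} {k : Fin (e + 1) → Fin n} (hk : IsWalk A B j i k) :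
    rho A B j i (e + 1) = walkWeight A B j k := by
  classical
  rw [rho]
  have h0 : ∀ b : Fin (e + 1) → Fin n, b ≠ k →
      (if IsWalk A B j i b then walkWeight A B j b else 0) = 0 := by
    intro b hb
    by_cases hbw : IsWalk A B j i b
    · exfalso
      obtain ⟨w, hw, hu⟩ := hout i
      have h1 := hu ⟨e, b⟩ hbw
      have h2 := hu ⟨e, k⟩ hk
      exact hb (eq_of_heq (Sigma.mk.inj_iff.1 (h1.trans h2.symm)).2)
    · simp [hbw]
  rw [Finset.sum_eq_single_of_mem k (Finset.mem_univ k) (fun b _ hb => h0 b hb), if_pos hk]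

lemma rho_zero_of_ne {n m : ℕ} {A : Matrix (Fin n) (Fin n) ℝ} {B : Matrix (Fin n) (Fin m) ℝ}
    {j : Fin m} {len : Fin n → ℕ}
    (hlen : ∀ (i : Fin n) (e : ℕ) (k : Fin (e + 1) → Fin n), IsWalk A B j i k → len i = e + 1)
    {i : Fin n} {d : ℕ} (hd : d ≠ len i) : rho A B j i d = 0 := by
  classical
  cases d with
  | zero => rfl
  | succ e =>
      rw [rho]
      refine Finset.sum_eq_zero fun k _ => ?_
      have : ¬ IsWalk A B j i k := fun h => hd ((hlen i e k h).symm)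
      simp [this]

lemma len_le_of_isWalk {n m : ℕ} {A : Matrix (Fin n) (Fin n) ℝ} {B : Matrix (Fin n) (Fin m) ℝ}
    {j : Fin m} {len : Fin n → ℕ}
    (hlen : ∀ (i : Fin n) (e : ℕ) (k : Fin (e + 1) → Fin n), IsWalk A B j i k → len i = e + 1)
    {i : Fin n} {e : ℕ} {k : Fin (e + 1) → Fin n} (hk : IsWalk A B j i k) : e + 1 ≤ n := by
  have hpref : ∀ t : Fin (e + 1), len (k t) = (t : ℕ) + 1 := by
    intro t
    have hle : (t : ℕ) + 1 ≤ e + 1 := t.isLt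
    set k' : Fin ((t : ℕ) + 1) → Fin n := fun s => k (Fin.castLE hle s) with hk'
    refine hlen (k t) (t : ℕ) k' ⟨?_, ?_, ?_⟩
    · show k (Fin.castLE hle (Fin.last _)) = k t
      congr 1
    · show B (k (Fin.castLE hle 0)) j ≠ 0
      have : Fin.castLE hle 0 = (0 : Fin (e + 1)) := by apply Fin.ext; simp
      rw [this]; exact hk.2.1
    · intro s
      have hs : (s : ℕ) < e := by omega
      have h1 : Fin.castLE hle s.succ = (⟨(s : ℕ), hs⟩ : Fin e).succ := by
        apply Fin.ext; simp
      have h2 : Fin.castLE hle s.castSucc = (⟨(s : ℕ), hs⟩ : Fin e).castSucc := by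
        apply Fin.ext; simp
      show A (k (Fin.castLE hle s.succ)) (k (Fin.castLE hle s.castSucc)) ≠ 0
      rw [h1, h2]
      exact hk.2.2 _
  have hinj : Function.Injective k := by
    intro a b hab
    have ha := hpref a
    have hb := hpref b
    rw [hab] at ha
    exact Fin.ext (by omega)
  simpa using Fintype.card_le_of_injective k hinj

lemma mem_Pset_iff {n m : ℕ} {A : Matrix (Fin n) (Fin n) ℝ} {B : Matrix (Fin n) (Fin m) ℝ}
    {j : Fin m} {len : Fin n → ℕ}
    (hout : ∀ i : Fin n, ∃! w : (e : ℕ) × (Fin (e + 1) → Fin n), IsWalk A B j i w.2)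
    (hlen : ∀ (i : Fin n) (e : ℕ) (k : Fin (e + 1) → Fin n), IsWalk A B j i k → len i = e + 1)
    (i : Fin n) (d : ℕ) :
    i ∈ Pset A B j d ↔ d = len i ∧ 0 < rho A B j i d := by
  have hlen0 : len i ≠ 0 := by
    obtain ⟨⟨e', k⟩, hw, -⟩ := hout i
    have := hlen i e' k hw
    omega
  cases d with
  | zero =>
      refine iff_of_false (by simp [Pset]) ?_
      rintro ⟨h, -⟩
      exact hlen0 h.symm
  | succ e =>
      constructor
      · rintro ⟨k, hk, hw⟩
        have hd := (hlen i e k hk).symm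
        exact ⟨hd, by rwa [rho_of_isWalk hout hk]⟩
      · rintro ⟨hd, hr⟩
        obtain ⟨w, hw, -⟩ := hout i
        obtain ⟨e', k⟩ := w
        have : e' = e := by have := hlen i e' k hw; omega
        subst this
        exact ⟨k, hw, by rwa [rho_of_isWalk hout hw] at hr⟩

lemma mem_Nset_iff {n m : ℕ} {A : Matrix (Fin n) (Fin n) ℝ} {B : Matrix (Fin n) (Fin m) ℝ}
    {j : Fin m} {len : Fin n → ℕ}
    (hout : ∀ i : Fin n, ∃! w : (e : ℕ) × (Fin (e + 1) → Fin n), IsWalk A B j i w.2)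
    (hlen : ∀ (i : Fin n) (e : ℕ) (k : Fin (e + 1) → Fin n), IsWalk A B j i k → len i = e + 1)
    (i : Fin n) (d : ℕ) :
    i ∈ Nset A B j d ↔ d = len i ∧ rho A B j i d < 0 := by
  have hlen0 : len i ≠ 0 := by
    obtain ⟨⟨e', k⟩, hw, -⟩ := hout i
    have := hlen i e' k hw
    omega
  cases d with
  | zero =>
      refine iff_of_false (by simp [Nset]) ?_
      rintro ⟨h, -⟩
      exact hlen0 h.symm
  | succ e =>
      constructor
      · rintro ⟨k, hk, hw⟩
        have hd := (hlen i e k hk).symm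
        exact ⟨hd, by rwa [rho_of_isWalk hout hk]⟩
      · rintro ⟨hd, hr⟩
        obtain ⟨w, hw, -⟩ := hout i
        obtain ⟨e', k⟩ := w
        have : e' = e := by have := hlen i e' k hw; omega
        subst this
        exact ⟨k, hw, by rwa [rho_of_isWalk hout hw] at hr⟩

lemma mulVec_ctrb_eq {n : ℕ} (A : Matrix (Fin n) (Fin n) ℝ) (B : Matrix (Fin n) (Fin 1) ℝ)
    (y : Fin n × Fin 1 → ℝ) (i : Fin n) :
    (ctrb A B).mulVec y i = ∑ d : Fin n, rho A B 0 i ((d : ℕ) + 1) * y (d, 0) := by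
  rw [Matrix.mulVec, dotProduct, Fintype.sum_prod_type]
  refine Finset.sum_congr rfl fun d _ => ?_
  rw [Fin.sum_univ_one]
  have h0 : ∀ p : Fin 1, p = 0 := fun p => Subsingleton.elim p 0
  rw [show (ctrb A B) i (d, 0) = rho A B 0 i ((d : ℕ) + 1) from pow_entry_eq_rho A B 0 i d]


/-- Single-input system whose graph is an input-rooted out-branching: every state is the
endpoint of exactly one walk from the input (unique over all lengths and all index
sequences; a walk of length `e + 1` is encoded by `e` together with its state sequence).
`len i` is the length of this unique walk and `dmax` its maximum over all states.
Then a set `S` of states is herdable (there is `k` in the range of the controllability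
matrix with `k i > 0` on `S`) iff `S ⊆ ⋃_{d=1}^{dmax} X_d` for some choice of sets
`X_d ∈ {P_d, N_d, ∅}`; moreover every such union is itself herdable. -/
theorem herdable_iff_union_outBranching {n : ℕ}
    (A : Matrix (Fin n) (Fin n) ℝ) (B : Matrix (Fin n) (Fin 1) ℝ)
    (hout : ∀ i : Fin n, ∃! w : (e : ℕ) × (Fin (e + 1) → Fin n), IsWalk A B 0 i w.2)
    (len : Fin n → ℕ)
    (hlen : ∀ (i : Fin n) (e : ℕ) (k : Fin (e + 1) → Fin n), IsWalk A B 0 i k →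
      len i = e + 1)
    (dmax : ℕ) (hdmax : dmax = Finset.univ.sup len) :
    (∀ S : Set (Fin n),
      (∃ k : Fin n → ℝ, (∃ y : Fin n × Fin 1 → ℝ, (ctrb A B).mulVec y = k) ∧
          ∀ i ∈ S, 0 < k i) ↔
        ∃ X : ℕ → Set (Fin n),
          (∀ d : ℕ, X d = Pset A B 0 d ∨ X d = Nset A B 0 d ∨ X d = ∅) ∧
          S ⊆ ⋃ d ∈ Finset.Icc 1 dmax, X d) ∧
    (∀ X : ℕ → Set (Fin n),
      (∀ d : ℕ, X d = Pset A B 0 d ∨ X d = Nset A B 0 d ∨ X d = ∅) →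
      ∃ k : Fin n → ℝ, (∃ y : Fin n × Fin 1 → ℝ, (ctrb A B).mulVec y = k) ∧
        ∀ i ∈ ⋃ d ∈ Finset.Icc 1 dmax, X d, 0 < k i) := by
  classical
  have hlen1 : ∀ i : Fin n, 1 ≤ len i ∧ len i ≤ n := by
    intro i
    obtain ⟨w, hw, -⟩ := hout i
    obtain ⟨e, k⟩ := w
    have h1 : len i = e + 1 := hlen i e k hw
    have h2 : e + 1 ≤ n := len_le_of_isWalk hlen hw
    omega
  have hlt : ∀ i : Fin n, len i - 1 < n := fun i => by have := hlen1 i; omega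
  set d0 : Fin n → Fin n := fun i => ⟨len i - 1, hlt i⟩ with hd0
  have hd0v : ∀ i : Fin n, ((d0 i : ℕ)) + 1 = len i := fun i => by
    have := hlen1 i; simp [hd0]; omega
  have hmv : ∀ (y : Fin n × Fin 1 → ℝ) (i : Fin n),
      (ctrb A B).mulVec y i = rho A B 0 i (len i) * y (d0 i, 0) := by
    intro y i
    rw [mulVec_ctrb_eq]
    rw [Finset.sum_eq_single_of_mem (d0 i) (Finset.mem_univ _) (fun d _ hd => ?_)]
    · rw [hd0v i]
    · have hne : (d : ℕ) + 1 ≠ len i := by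
        intro hc
        apply hd
        apply Fin.ext
        have := hd0v i
        omega
      rw [rho_zero_of_ne hlen hne, zero_mul]
  -- Part 2
  have part2 : ∀ X : ℕ → Set (Fin n),
      (∀ d : ℕ, X d = Pset A B 0 d ∨ X d = Nset A B 0 d ∨ X d = ∅) →
      ∃ k : Fin n → ℝ, (∃ y : Fin n × Fin 1 → ℝ, (ctrb A B).mulVec y = k) ∧
        ∀ i ∈ ⋃ d ∈ Finset.Icc 1 dmax, X d, 0 < k i := by
    intro X hX
    set s : ℕ → ℝ := fun d => if X d = Pset A B 0 d then 1 else -1 with hs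
    set y : Fin n × Fin 1 → ℝ := fun p => s ((p.1 : ℕ) + 1) with hy
    refine ⟨(ctrb A B).mulVec y, ⟨y, rfl⟩, ?_⟩
    intro i hi
    simp only [Set.mem_iUnion] at hi
    obtain ⟨d, hd, hid⟩ := hi
    rw [hmv y i]
    have hyv : y (d0 i, 0) = s (len i) := by rw [hy]; simp only; rw [hd0v i]
    rw [hyv]
    rcases hX d with hXd | hXd | hXd
    · obtain ⟨hdl, hr⟩ := (mem_Pset_iff hout hlen i d).1 (hXd ▸ hid)
      subst hdl
      have hs1 : s (len i) = 1 := if_pos hXd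
      rw [hs1]
      linarith
    · obtain ⟨hdl, hr⟩ := (mem_Nset_iff hout hlen i d).1 (hXd ▸ hid)
      subst hdl
      have hnP : ¬ (X (len i) = Pset A B 0 (len i)) := by
        intro hP
        obtain ⟨-, hr2⟩ := (mem_Pset_iff hout hlen i (len i)).1 (hP ▸ hid)
        linarith
      have hs1 : s (len i) = -1 := if_neg hnP
      rw [hs1]
      linarith
    · rw [hXd] at hid
      exact absurd hid (Set.notMem_empty i)
  refine ⟨fun S => ⟨?_, ?_⟩, part2⟩
  · rintro ⟨k, ⟨y, hky⟩, hkS⟩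
    refine ⟨fun d => if hd : 1 ≤ d ∧ d ≤ n then
        (if 0 < y (⟨d - 1, by omega⟩, 0) then Pset A B 0 d
          else if y (⟨d - 1, by omega⟩, 0) < 0 then Nset A B 0 d else ∅) else ∅, ?_, ?_⟩
    · intro d
      dsimp only
      split_ifs
      · exact Or.inl rfl
      · exact Or.inr (Or.inl rfl)
      · exact Or.inr (Or.inr rfl)
      · exact Or.inr (Or.inr rfl)
    · intro i hiS
      have hk := hkS i hiS
      rw [← hky, hmv y i] at hk
      have hcond : 1 ≤ len i ∧ len i ≤ n := hlen1 i
      have hdm : len i ≤ dmax := hdmax ▸ Finset.le_sup (Finset.mem_univ i)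
      have hfin : (⟨len i - 1, by omega⟩ : Fin n) = d0 i := by apply Fin.ext; simp [hd0]
      simp only [Set.mem_iUnion]
      refine ⟨len i, Finset.mem_Icc.2 ⟨hcond.1, hdm⟩, ?_⟩
      rw [dif_pos hcond, hfin]
      rcases lt_trichotomy (y (d0 i, 0)) 0 with hy0 | hy0 | hy0
      · have hr : rho A B 0 i (len i) < 0 := by nlinarith
        rw [if_neg (by linarith), if_pos hy0]
        exact (mem_Nset_iff hout hlen i (len i)).2 ⟨rfl, hr⟩
      · rw [hy0, mul_zero] at hk
        exact absurd hk (lt_irrefl 0)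
      · have hr : 0 < rho A B 0 i (len i) := by nlinarith
        rw [if_pos hy0]
        exact (mem_Pset_iff hout hlen i (len i)).2 ⟨rfl, hr⟩
  · rintro ⟨X, hX, hSX⟩
    obtain ⟨k, hk, hpos⟩ := part2 X hX
    exact ⟨k, hk, fun i hi => hpos i (hSX hi)⟩
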